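/- Let e ∈ H be a unitary tripotent of the spin factor ({e,e,x} = x for all x ∈ H) and let z ∈ H satisfy ‖z‖_sp = 1, ‖e + z‖_sp = 2 and ‖e − z‖_sp = 2. Then {e,z,e} = z, ⟨z|e⟩ = 0, and z is itself a unitary tripotent, i.e. {z,z,x} = x for all x ∈ H. -/

import Mathlib

open scoped InnerProductSpace

/-- The inner product `⟨x|y⟩` of the paper: linear in `x`, conjugate-linear in `y`
(Mathlib's `⟪·,·⟫_ℂ` is conjugate-linear in the first variable). -/
noncomputable def sip {H : Type*} [NormedAddCommGroup H] [InnerProductSpace ℂ H]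
    (x y : H) : ℂ := ⟪y, x⟫_ℂ

/-- The spin factor triple product `{x,y,z} = ⟨x|y⟩z + ⟨z|y⟩x − ⟨x|Jz⟩Jy`
associated with a conjugation `J`. -/
noncomputable def tp {H : Type*} [NormedAddCommGroup H] [InnerProductSpace ℂ H]
    (J : H → H) (x y z : H) : H :=
  sip x y • z + sip z y • x - sip x (J z) • J y

/-- The spin norm `‖x‖_sp = √(⟨x|x⟩ + √(⟨x|x⟩² − |⟨x|Jx⟩|²))`. -/
noncomputable def spNorm {H : Type*} [NormedAddCommGroup H] [InnerProductSpace ℂ H]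
    (J : H → H) (x : H) : ℝ :=
  Real.sqrt ((sip x x).re + Real.sqrt ((sip x x).re ^ 2 - ‖sip x (J x)‖ ^ 2))

lemma jconj {H : Type*} [NormedAddCommGroup H] [InnerProductSpace ℂ H]
    (J : H → H)
    (hJadd : ∀ x y : H, J (x + y) = J x + J y)
    (hJsmul : ∀ (c : ℂ) (x : H), J (c • x) = (starRingEnd ℂ) c • J x)
    (hJiso : ∀ x : H, ‖J x‖ = ‖x‖)
    (x y : H) : ⟪J x, J y⟫_ℂ = ⟪y, x⟫_ℂ := by
  have hJneg : ∀ v : H, J (-v) = -(J v) := by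
    intro v; have := hJsmul (-1) v; simpa using this
  have hJsub : ∀ u v : H, J (u - v) = J u - J v := by
    intro u v; rw [sub_eq_add_neg, hJadd, hJneg, sub_eq_add_neg]
  have h1 : ‖J x + J y‖ = ‖y + x‖ := by rw [← hJadd, hJiso, add_comm]
  have h2 : ‖J x - J y‖ = ‖y - x‖ := by rw [← hJsub, hJiso, norm_sub_rev]
  have h3 : ‖J x - Complex.I • J y‖ = ‖y - Complex.I • x‖ := by
    have e1 : J x - Complex.I • J y = J (x + Complex.I • y) := by
      rw [hJadd, hJsmul]
      simp [Complex.conj_I, sub_eq_add_neg, neg_smul]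
    rw [e1, hJiso]
    have e2 : Complex.I • (y - Complex.I • x) = x + Complex.I • y := by
      rw [smul_sub, smul_smul, Complex.I_mul_I]
      simp [add_comm]
    calc ‖x + Complex.I • y‖ = ‖Complex.I • (y - Complex.I • x)‖ := by rw [e2]
      _ = ‖y - Complex.I • x‖ := by rw [norm_smul]; simp
  have h4 : ‖J x + Complex.I • J y‖ = ‖y + Complex.I • x‖ := by
    have e1 : J x + Complex.I • J y = J (x - Complex.I • y) := by
      rw [hJsub, hJsmul]
      simp [Complex.conj_I, sub_eq_add_neg, neg_smul]
    rw [e1, hJiso]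
    have e2 : Complex.I • (y + Complex.I • x) = -(x - Complex.I • y) := by
      rw [smul_add, smul_smul, Complex.I_mul_I]
      simp [sub_eq_add_neg, add_comm]
    calc ‖x - Complex.I • y‖ = ‖-(x - Complex.I • y)‖ := (norm_neg _).symm
      _ = ‖Complex.I • (y + Complex.I • x)‖ := by rw [e2]
      _ = ‖y + Complex.I • x‖ := by rw [norm_smul]; simp
  rw [inner_eq_sum_norm_sq_div_four (J x) (J y), inner_eq_sum_norm_sq_div_four y x]
  norm_num [h1, h2, h3, h4]

lemma spfacts {H : Type*} [NormedAddCommGroup H] [InnerProductSpace ℂ H]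
    (J : H → H) (hJiso : ∀ x : H, ‖J x‖ = ‖x‖) (x : H) (s : ℝ) (h : spNorm J x = s) :
    ‖⟪J x, x⟫_ℂ‖ ≤ ‖x‖ ^ 2 ∧
      ‖x‖ ^ 2 + Real.sqrt ((‖x‖ ^ 2) ^ 2 - ‖⟪J x, x⟫_ℂ‖ ^ 2) = s ^ 2 := by
  have hcs : ‖⟪J x, x⟫_ℂ‖ ≤ ‖x‖ ^ 2 := by
    have h1 := norm_inner_le_norm (𝕜 := ℂ) (J x) x
    rw [hJiso] at h1
    calc ‖⟪J x, x⟫_ℂ‖ = ‖⟪J x, x⟫_ℂ‖ := rfl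
      _ ≤ ‖x‖ * ‖x‖ := h1
      _ = ‖x‖ ^ 2 := (sq ‖x‖).symm
  refine ⟨hcs, ?_⟩
  have hre : (sip x x).re = ‖x‖ ^ 2 := by
    have h1 := @inner_self_eq_norm_sq ℂ H _ _ _ x
    rw [RCLike.re_to_complex] at h1
    rw [sip]
    exact h1
  have habs : ‖sip x (J x)‖ = ‖⟪J x, x⟫_ℂ‖ := rfl
  have h0 : 0 ≤ ‖x‖ ^ 2 + Real.sqrt ((‖x‖ ^ 2) ^ 2 - ‖⟪J x, x⟫_ℂ‖ ^ 2) :=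
    add_nonneg (sq_nonneg _) (Real.sqrt_nonneg _)
  calc ‖x‖ ^ 2 + Real.sqrt ((‖x‖ ^ 2) ^ 2 - ‖⟪J x, x⟫_ℂ‖ ^ 2)
      = Real.sqrt (‖x‖ ^ 2 + Real.sqrt ((‖x‖ ^ 2) ^ 2 - ‖⟪J x, x⟫_ℂ‖ ^ 2)) ^ 2 :=
        (Real.sq_sqrt h0).symm
    _ = s ^ 2 := by
        rw [← h]
        congr 1
        rw [spNorm, hre, habs]


/-- If `e` is a unitary tripotent of the spin factor and `z` is a norm-one element with
`‖e + z‖_sp = ‖e − z‖_sp = 2`, then `z` lies in the self-adjoint part of the Peirce-2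
space of `e`, is `⟨·|·⟩`-orthogonal to `e`, and is itself a unitary tripotent. -/
theorem stmt13 {H : Type*} [NormedAddCommGroup H] [InnerProductSpace ℂ H]
    (J : H → H)
    (hJadd : ∀ x y : H, J (x + y) = J x + J y)
    (hJsmul : ∀ (c : ℂ) (x : H), J (c • x) = (starRingEnd ℂ) c • J x)
    (hJiso : ∀ x : H, ‖J x‖ = ‖x‖)
    (hJinv : ∀ x : H, J (J x) = x)
    (e : H) (he : ∀ x : H, tp J e e x = x)
    (z : H) (hz : spNorm J z = 1)
    (hplus : spNorm J (e + z) = 2) (hminus : spNorm J (e - z) = 2) :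
    tp J e z e = z ∧ sip z e = 0 ∧ ∀ x : H, tp J z z x = x := by
  have hC := jconj J hJadd hJsmul hJiso
  have hsym : ∀ u v : H, ⟪J u, v⟫_ℂ = ⟪J v, u⟫_ℂ := by
    intro u v
    conv_lhs => rw [← hJinv v]
    exact hC u (J v)
  have id1 : ∀ x : H, ⟪e, e⟫_ℂ • x + ⟪e, x⟫_ℂ • e - ⟪J e, x⟫_ℂ • J e = x := by
    intro x
    have h := he x
    simp only [tp, sip] at h
    rwa [hsym x e] at h
  have hJ0 : J 0 = 0 := by have := hJsmul 0 0; simpa using this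
  by_cases he0 : e = 0
  · -- degenerate: H = 0
    have hall : ∀ x : H, x = 0 := by
      intro x
      have h := id1 x
      rw [he0, hJ0] at h
      simpa using h.symm
    refine ⟨(hall _).trans (hall _).symm, ?_, fun x => (hall _).trans (hall _).symm⟩
    rw [sip, hall z, inner_zero_right]
  · -- main case
    set c : ℂ := ⟪J e, e⟫_ℂ with hc
    have hJee : ⟪J e, J e⟫_ℂ = ⟪e, e⟫_ℂ := hC e e
    have hJe : J e = (starRingEnd ℂ) c • e := by
      have h := id1 (J e)
      rw [hJee, add_sub_cancel_left] at h
      rw [← h, ← inner_conj_symm e (J e)]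
    have hne : ‖e‖ ≠ 0 := norm_ne_zero_iff.2 he0
    have hc1 : ‖c‖ = 1 := by
      have h := hJiso e
      rw [hJe, norm_smul] at h
      have h2 : ‖(starRingEnd ℂ) c‖ * ‖e‖ = 1 * ‖e‖ := by rw [one_mul]; exact h
      have h3 := mul_right_cancel₀ hne h2
      simpa using h3
    have hcc : c * (starRingEnd ℂ) c = 1 := by
      rw [Complex.mul_conj, Complex.normSq_eq_norm_sq, hc1]
      norm_num
    have hee : ⟪e, e⟫_ℂ = 1 := by
      have h := id1 e
      rw [hJe, inner_smul_left, smul_smul] at h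
      have hsimp : (starRingEnd ℂ) ((starRingEnd ℂ) c) * ⟪e, e⟫_ℂ * ((starRingEnd ℂ) c) = ⟪e, e⟫_ℂ := by
        rw [RingHomCompTriple.comp_apply, RingHom.id_apply, mul_comm c _, mul_assoc, hcc, mul_one]
      rw [hsimp, add_sub_cancel_right] at h
      have h2 : (⟪e, e⟫_ℂ - 1) • e = 0 := by rw [sub_smul, one_smul, h, sub_self]
      exact sub_eq_zero.mp ((smul_eq_zero.mp h2).resolve_right he0)
    have hnorme : ‖e‖ = 1 := by
      have h := inner_self_eq_norm_sq_to_K (𝕜 := ℂ) e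
      rw [hee] at h
      have h2 : (‖e‖ : ℂ) ^ 2 = (1 : ℂ) := h.symm
      have h3 : ‖e‖ ^ 2 = 1 := by exact_mod_cast h2
      nlinarith [norm_nonneg e]
    -- J is subtractive
    have hJneg : ∀ v : H, J (-v) = -(J v) := by
      intro v; have := hJsmul (-1) v; simpa using this
    have hJsub : ∀ u v : H, J (u - v) = J u - J v := by
      intro u v; rw [sub_eq_add_neg, hJadd, hJneg, sub_eq_add_neg]
    -- spin-norm facts
    obtain ⟨hbz, hz2⟩ := spfacts J hJiso z 1 hz
    obtain ⟨hbp, hp2⟩ := spfacts J hJiso (e + z) 2 hplus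
    obtain ⟨hbm, hm2⟩ := spfacts J hJiso (e - z) 2 hminus
    have ht_le : ‖z‖ ^ 2 ≤ 1 := by
      have h0 := Real.sqrt_nonneg ((‖z‖ ^ 2) ^ 2 - ‖⟪J z, z⟫_ℂ‖ ^ 2)
      linarith only [h0, hz2]
    have hsqleA : Real.sqrt ((‖e + z‖ ^ 2) ^ 2 - ‖⟪J (e + z), e + z⟫_ℂ‖ ^ 2) ≤ ‖e + z‖ ^ 2 := by
      calc Real.sqrt ((‖e + z‖ ^ 2) ^ 2 - ‖⟪J (e + z), e + z⟫_ℂ‖ ^ 2)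
          ≤ Real.sqrt ((‖e + z‖ ^ 2) ^ 2) :=
            Real.sqrt_le_sqrt (by nlinarith [norm_nonneg ⟪J (e + z), e + z⟫_ℂ])
        _ = ‖e + z‖ ^ 2 := Real.sqrt_sq (sq_nonneg _)
    have hsqleA' : Real.sqrt ((‖e - z‖ ^ 2) ^ 2 - ‖⟪J (e - z), e - z⟫_ℂ‖ ^ 2) ≤ ‖e - z‖ ^ 2 := by
      calc Real.sqrt ((‖e - z‖ ^ 2) ^ 2 - ‖⟪J (e - z), e - z⟫_ℂ‖ ^ 2)
          ≤ Real.sqrt ((‖e - z‖ ^ 2) ^ 2) :=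
            Real.sqrt_le_sqrt (by nlinarith [norm_nonneg ⟪J (e - z), e - z⟫_ℂ])
        _ = ‖e - z‖ ^ 2 := Real.sqrt_sq (sq_nonneg _)
    have hA_ge : 2 ≤ ‖e + z‖ ^ 2 := by linarith only [hp2, hsqleA]
    have hA'_ge : 2 ≤ ‖e - z‖ ^ 2 := by linarith only [hm2, hsqleA']
    have hpar1 : ‖e + z‖ ^ 2 = 1 + 2 * RCLike.re ⟪e, z⟫_ℂ + ‖z‖ ^ 2 := by
      have h := @norm_add_sq ℂ H _ _ _ e z
      rw [hnorme] at h
      rw [h]; norm_num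
    have hpar2 : ‖e - z‖ ^ 2 = 1 - 2 * RCLike.re ⟪e, z⟫_ℂ + ‖z‖ ^ 2 := by
      have h := @norm_sub_sq ℂ H _ _ _ e z
      rw [hnorme] at h
      rw [h]; norm_num
    have ht1 : ‖z‖ ^ 2 = 1 := by linarith only [hpar1, hpar2, hA_ge, hA'_ge, ht_le]
    have hAeq : ‖e + z‖ ^ 2 = 2 := by linarith only [hpar1, hpar2, hA_ge, hA'_ge, ht1]
    have hA'eq : ‖e - z‖ ^ 2 = 2 := by linarith only [hpar1, hpar2, hA_ge, hA'_ge, ht1]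
    have hnz : ‖z‖ = 1 := by
      rw [← Real.sqrt_sq (norm_nonneg z), ht1, Real.sqrt_one]
    have hBp : ⟪J (e + z), e + z⟫_ℂ = 0 := by
      have h1 : Real.sqrt ((‖e + z‖ ^ 2) ^ 2 - ‖⟪J (e + z), e + z⟫_ℂ‖ ^ 2) = 2 := by
        linarith only [hp2, hAeq]
      have hnn : 0 ≤ (‖e + z‖ ^ 2) ^ 2 - ‖⟪J (e + z), e + z⟫_ℂ‖ ^ 2 := by
        have hfact : ((‖e + z‖ ^ 2) - ‖⟪J (e + z), e + z⟫_ℂ‖) * ((‖e + z‖ ^ 2) + ‖⟪J (e + z), e + z⟫_ℂ‖) = (‖e + z‖ ^ 2) ^ 2 - ‖⟪J (e + z), e + z⟫_ℂ‖ ^ 2 := by ring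
        have hm1 := mul_nonneg (sub_nonneg.2 hbp) (add_nonneg (sq_nonneg ‖e + z‖) (norm_nonneg ⟪J (e + z), e + z⟫_ℂ))
        linarith only [hfact, hm1]
      have h2 := Real.sq_sqrt hnn
      rw [h1] at h2
      rw [hAeq] at h2
      have hB2 : ‖⟪J (e + z), e + z⟫_ℂ‖ ^ 2 = 0 := by linarith only [h2]
      have h3 : ‖⟪J (e + z), e + z⟫_ℂ‖ = 0 := pow_eq_zero_iff two_ne_zero |>.mp hB2
      exact norm_eq_zero.mp h3
    have hBm : ⟪J (e - z), e - z⟫_ℂ = 0 := by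
      have h1 : Real.sqrt ((‖e - z‖ ^ 2) ^ 2 - ‖⟪J (e - z), e - z⟫_ℂ‖ ^ 2) = 2 := by
        linarith only [hm2, hA'eq]
      have hnn : 0 ≤ (‖e - z‖ ^ 2) ^ 2 - ‖⟪J (e - z), e - z⟫_ℂ‖ ^ 2 := by
        have hfact : ((‖e - z‖ ^ 2) - ‖⟪J (e - z), e - z⟫_ℂ‖) * ((‖e - z‖ ^ 2) + ‖⟪J (e - z), e - z⟫_ℂ‖) = (‖e - z‖ ^ 2) ^ 2 - ‖⟪J (e - z), e - z⟫_ℂ‖ ^ 2 := by ring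
        have hm1 := mul_nonneg (sub_nonneg.2 hbm) (add_nonneg (sq_nonneg ‖e - z‖) (norm_nonneg ⟪J (e - z), e - z⟫_ℂ))
        linarith only [hfact, hm1]
      have h2 := Real.sq_sqrt hnn
      rw [h1] at h2
      rw [hA'eq] at h2
      have hB2 : ‖⟪J (e - z), e - z⟫_ℂ‖ ^ 2 = 0 := by linarith only [h2]
      have h3 : ‖⟪J (e - z), e - z⟫_ℂ‖ = 0 := pow_eq_zero_iff two_ne_zero |>.mp hB2
      exact norm_eq_zero.mp h3
    -- expand the forms on e ± z
    have hPexp : ⟪J (e + z), e + z⟫_ℂ = c + ⟪J z, z⟫_ℂ + 2 * ⟪J e, z⟫_ℂ := by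
      rw [hJadd, inner_add_left, inner_add_right, inner_add_right, hsym z e, ← hc]
      ring
    have hMexp : ⟪J (e - z), e - z⟫_ℂ = c + ⟪J z, z⟫_ℂ - 2 * ⟪J e, z⟫_ℂ := by
      rw [hJsub, inner_sub_left, inner_sub_right, inner_sub_right, hsym z e, ← hc]
      ring
    have h1 : c + ⟪J z, z⟫_ℂ + 2 * ⟪J e, z⟫_ℂ = 0 := by rw [← hPexp]; exact hBp
    have h2 : c + ⟪J z, z⟫_ℂ - 2 * ⟪J e, z⟫_ℂ = 0 := by rw [← hMexp]; exact hBm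
    have hw : ⟪J e, z⟫_ℂ = 0 := by linear_combination (h1 - h2) / 4
    have hd : ⟪J z, z⟫_ℂ = -c := by linear_combination (h1 + h2) / 2
    have hc0 : c ≠ 0 := by
      intro h0
      rw [h0] at hc1
      simp at hc1
    have hez : ⟪e, z⟫_ℂ = 0 := by
      have h := hw
      rw [hJe, inner_smul_left, Complex.conj_conj] at h
      exact (mul_eq_zero.mp h).resolve_left hc0
    have hze : ⟪z, e⟫_ℂ = 0 := by
      have h := inner_conj_symm (𝕜 := ℂ) z e
      rw [hez] at h
      simpa using h.symm
    have hdd : ⟪J z, z⟫_ℂ * (starRingEnd ℂ) ⟪J z, z⟫_ℂ = 1 := by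
      rw [hd, map_neg, neg_mul_neg, hcc]
    have habsd : ‖(starRingEnd ℂ) ⟪J z, z⟫_ℂ‖ = 1 := by
      rw [RCLike.norm_conj, hd, norm_neg, hc1]
    have hJz : J z = (starRingEnd ℂ) ⟪J z, z⟫_ℂ • z := by
      have hre1 : RCLike.re ((starRingEnd ℂ) ⟪J z, z⟫_ℂ * ⟪J z, z⟫_ℂ) = 1 := by
        rw [mul_comm, hdd]
        simp
      have hkey : ‖J z - (starRingEnd ℂ) ⟪J z, z⟫_ℂ • z‖ ^ 2 = 0 := by
        rw [@norm_sub_sq ℂ H _ _ _, inner_smul_right, hJiso, hnz, norm_smul, hnz, habsd, hre1]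
        norm_num
      exact sub_eq_zero.mp (norm_eq_zero.mp (pow_eq_zero_iff two_ne_zero |>.mp hkey))
    have hzz : ⟪z, z⟫_ℂ = 1 := by
      rw [inner_self_eq_norm_sq_to_K, hnz]
      norm_num
    refine ⟨?_, ?_, ?_⟩
    · -- tp J e z e = z
      simp only [tp, sip]
      rw [hze, hJz, smul_smul, ← hc, hd, map_neg, mul_neg, hcc]
      simp
    · -- sip z e = 0
      rw [sip]
      exact hez
    · -- z is a unitary tripotent
      intro x
      simp only [tp, sip]
      rw [hzz, hsym x z, hJz, inner_smul_left, Complex.conj_conj, smul_smul]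
      have hs : ⟪J z, z⟫_ℂ * ⟪z, x⟫_ℂ * (starRingEnd ℂ) ⟪J z, z⟫_ℂ = ⟪z, x⟫_ℂ := by
        rw [mul_right_comm, hdd, one_mul]
      rw [hs, one_smul, add_sub_cancel_right]
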